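/- For all integers n ≥ 1 and k ≥ 1, the dimension of the endomorphism algebra of the k-th tensor power of the standard representation of the dicyclic group of degree n is given by the closed formula dim_ℂ End_{Dic_n}(V^{⊗k}) = (2^{2k+1}/(4n)) · (1 + Σ_{m=1}^{n-1} cos^{2k}(mπ/n)), as an equality of real numbers. -/

import Mathlib

open scoped TensorProduct
open Matrix

noncomputable section

/-- `ℂ²`, the standard two-dimensional complex vector space. -/
abbrev V2 : Type := Fin 2 → ℂ

/-- The standard representation of a subgroup `G ≤ GL₂(ℂ)` on `ℂ²`, by matrix-vector
multiplication. -/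
def stdRep (G : Subgroup (GL (Fin 2) ℂ)) : Representation ℂ G V2 where
  toFun g := Matrix.toLin' ((g : GL (Fin 2) ℂ) : Matrix (Fin 2) (Fin 2) ℂ)
  map_one' := by
    simp only [OneMemClass.coe_one, Units.val_one, Matrix.toLin'_one]
    rfl
  map_mul' g h := by
    simp only [MulMemClass.coe_mul, Units.val_mul, Matrix.toLin'_mul]
    rfl

/-- `TPow j` is the `(j+1)`-st tensor power `V^{⊗(j+1)}` of `V = ℂ²`, realized as an
iterated binary tensor product (bundled as an object of `ModuleCat ℂ` so that the
recursion carries its module structure). -/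
def TPow : ℕ → ModuleCat ℂ
  | 0 => ModuleCat.of ℂ V2
  | (j + 1) => ModuleCat.of ℂ (TPow j ⊗[ℂ] V2)

/-- The diagonal representation of `G ≤ GL₂(ℂ)` on `TPow j = V^{⊗(j+1)}`. -/
def TPowRep (G : Subgroup (GL (Fin 2) ℂ)) : (j : ℕ) → Representation ℂ G (TPow j)
  | 0 => stdRep G
  | (j + 1) => (TPowRep G j).tprod (stdRep G)

/-- The basis vector `v_s^{⊗(j+1)}` of `TPow j = V^{⊗(j+1)}`, for `s : Fin 2`. -/
def vpow (s : Fin 2) : (j : ℕ) → TPow j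
  | 0 => Pi.single s 1
  | (j + 1) => vpow s j ⊗ₜ[ℂ] Pi.single s 1

/-- The subspace `V_{j+1}` of `V^{⊗(j+1)}` spanned by `v₁^{⊗(j+1)}` and `v₂^{⊗(j+1)}`. -/
def Vsub (j : ℕ) : Submodule ℂ (TPow j) := Submodule.span ℂ {vpow 0 j, vpow 1 j}

/-- The space `End_G(W)` of `G`-equivariant linear endomorphisms of a representation `W`. -/
def equivEnd {G W : Type*} [Group G] [AddCommGroup W] [Module ℂ W]
    (ρ : Representation ℂ G W) : Submodule ℂ (W →ₗ[ℂ] W) where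
  carrier := {f | ∀ g : G, f ∘ₗ ρ g = ρ g ∘ₗ f}
  add_mem' := by
    intro f h hf hh g
    simp only [LinearMap.add_comp, LinearMap.comp_add, hf g, hh g]
  zero_mem' := by
    intro g
    simp only [LinearMap.zero_comp, LinearMap.comp_zero]
  smul_mem' := by
    intro c f hf g
    simp only [LinearMap.smul_comp, LinearMap.comp_smul, hf g]

def Idx : ℕ → Type
  | 0 => Fin 2
  | (j+1) => Idx j × Fin 2

instance idxFintype : ∀ j, Fintype (Idx j)
  | 0 => inferInstanceAs (Fintype (Fin 2))
  | (j+1) => @instFintypeProd _ _ (idxFintype j) inferInstance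

instance idxDecEq : ∀ j, DecidableEq (Idx j)
  | 0 => inferInstanceAs (DecidableEq (Fin 2))
  | (j+1) => @instDecidableEqProd _ _ (idxDecEq j) inferInstance

def swap2 : Fin 2 → Fin 2 := fun s => if s = 0 then 1 else 0
def Wt0 : Fin 2 → ℤ := fun s => if s = 0 then 1 else -1
def sgn0 : Fin 2 → ℂ := fun s => if s = 0 then 1 else -1

def Wt : (j : ℕ) → Idx j → ℤ
  | 0 => Wt0
  | (j+1) => fun p => Wt j p.1 + Wt0 p.2

def sgn : (j : ℕ) → Idx j → ℂ
  | 0 => sgn0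
  | (j+1) => fun p => sgn j p.1 * sgn0 p.2

def cmpl : (j : ℕ) → Idx j → Idx j
  | 0 => swap2
  | (j+1) => fun p => (cmpl j p.1, swap2 p.2)

def lst : (j : ℕ) → Idx j → Fin 2
  | 0 => id
  | (_+1) => fun p => p.2

lemma swap2_swap2 (s : Fin 2) : swap2 (swap2 s) = s := by fin_cases s <;> rfl

lemma cmpl_cmpl (j : ℕ) (i : Idx j) : cmpl j (cmpl j i) = i := by
  induction j with
  | zero => exact swap2_swap2 i
  | succ j ih => exact Prod.ext (ih i.1) (swap2_swap2 i.2)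

lemma lst_cmpl (j : ℕ) (i : Idx j) : lst j (cmpl j i) = swap2 (lst j i) := by
  cases j <;> rfl

lemma Wt_cmpl (j : ℕ) (i : Idx j) : Wt j (cmpl j i) = -Wt j i := by
  induction j with
  | zero => fin_cases i <;> rfl
  | succ j ih =>
      obtain ⟨i, s⟩ := i
      show Wt j (cmpl j i) + Wt0 (swap2 s) = -(Wt j i + Wt0 s)
      rw [ih]
      fin_cases s <;> simp [Wt0, swap2] <;> ring

lemma sgn_mul_self (j : ℕ) (i : Idx j) : sgn j i * sgn j i = 1 := by
  induction j with
  | zero => fin_cases i <;> norm_num [sgn, sgn0]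
  | succ j ih =>
      obtain ⟨i, s⟩ := i
      show (sgn j i * sgn0 s) * (sgn j i * sgn0 s) = 1
      have h2 : sgn0 s * sgn0 s = 1 := by fin_cases s <;> norm_num [sgn0]
      calc (sgn j i * sgn0 s) * (sgn j i * sgn0 s)
          = (sgn j i * sgn j i) * (sgn0 s * sgn0 s) := by ring
        _ = 1 := by rw [ih, h2, one_mul]

lemma sgn_mul_cmpl (j : ℕ) (i : Idx j) : sgn j i * sgn j (cmpl j i) = (-1)^(j+1) := by
  induction j with
  | zero => fin_cases i <;> norm_num [sgn, sgn0, cmpl, swap2]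
  | succ j ih =>
      obtain ⟨i, s⟩ := i
      show (sgn j i * sgn0 s) * (sgn j (cmpl j i) * sgn0 (swap2 s)) = (-1)^(j+1+1)
      have h2 : sgn0 s * sgn0 (swap2 s) = -1 := by
        fin_cases s <;> norm_num [sgn0, swap2]
      calc (sgn j i * sgn0 s) * (sgn j (cmpl j i) * sgn0 (swap2 s))
          = (sgn j i * sgn j (cmpl j i)) * (sgn0 s * sgn0 (swap2 s)) := by ring
        _ = (-1)^(j+1) * (-1) := by rw [ih i, h2]
        _ = (-1)^(j+1+1) := by ring
-- Basis
def IB : (j : ℕ) → Module.Basis (Idx j) ℂ (TPow j)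
  | 0 => Pi.basisFun ℂ (Fin 2)
  | (j+1) => (IB j).tensorProduct (Pi.basisFun ℂ (Fin 2))

lemma IB_zero (s : Fin 2) : IB 0 s = Pi.single s 1 :=
  Pi.basisFun_apply ℂ (Fin 2) s

lemma IB_succ (j : ℕ) (i : Idx j) (s : Fin 2) :
    IB (j+1) (i, s) = IB j i ⊗ₜ[ℂ] Pi.single s 1 := by
  show ((IB j).tensorProduct (Pi.basisFun ℂ (Fin 2))) (i, s) = _
  rw [Module.Basis.tensorProduct_apply, Pi.basisFun_apply]

section Rep
variable (n : ℕ) (X A : GL (Fin 2) ℂ) (G : Subgroup (GL (Fin 2) ℂ))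

def eL (j : ℕ) (i : Idx j) : ℂ := Complex.exp (Real.pi * Complex.I * (Wt j i) / n)

lemma stdRep_A (hA : (A : Matrix (Fin 2) (Fin 2) ℂ) =
      !![Complex.exp (Real.pi * Complex.I / n), 0;
         0, Complex.exp (-(Real.pi * Complex.I / n))])
    (AG : G) (hAG : (AG : GL (Fin 2) ℂ) = A) (s : Fin 2) :
    stdRep G AG (Pi.single s 1)
      = Complex.exp (Real.pi * Complex.I * (Wt0 s) / n) • (Pi.single s 1 : V2) := by
  show Matrix.toLin' ((AG : GL (Fin 2) ℂ) : Matrix (Fin 2) (Fin 2) ℂ) (Pi.single s 1) = _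
  rw [hAG, hA, Matrix.toLin'_apply, Matrix.mulVec_single]
  funext i
  fin_cases s <;> fin_cases i <;>
    simp [Wt0, Pi.single_apply, Matrix.cons_val_zero, Matrix.cons_val_one] <;>
    ring_nf

lemma stdRep_X (hX : (X : Matrix (Fin 2) (Fin 2) ℂ) = !![0, -1; 1, 0])
    (XG : G) (hXG : (XG : GL (Fin 2) ℂ) = X) (s : Fin 2) :
    stdRep G XG (Pi.single s 1) = sgn0 s • (Pi.single (swap2 s) 1 : V2) := by
  show Matrix.toLin' ((XG : GL (Fin 2) ℂ) : Matrix (Fin 2) (Fin 2) ℂ) (Pi.single s 1) = _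
  rw [hXG, hX, Matrix.toLin'_apply, Matrix.mulVec_single]
  funext i
  fin_cases s <;> fin_cases i <;>
    simp [sgn0, swap2, Pi.single_apply]

lemma repA (hA : (A : Matrix (Fin 2) (Fin 2) ℂ) =
      !![Complex.exp (Real.pi * Complex.I / n), 0;
         0, Complex.exp (-(Real.pi * Complex.I / n))])
    (AG : G) (hAG : (AG : GL (Fin 2) ℂ) = A) (j : ℕ) (i : Idx j) :
    TPowRep G j AG (IB j i) = eL n j i • IB j i := by
  induction j with
  | zero =>
      erw [IB_zero]
      exact stdRep_A n A G hA AG hAG i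
  | succ j ih =>
      obtain ⟨i, s⟩ := i
      rw [IB_succ]
      show ((TPowRep G j).tprod (stdRep G)) AG (IB j i ⊗ₜ[ℂ] Pi.single s 1) = _
      rw [Representation.tprod_apply, TensorProduct.map_tmul, ih,
        stdRep_A n A G hA AG hAG s, TensorProduct.tmul_smul, ← TensorProduct.smul_tmul',
        smul_smul]
      congr 1
      show _ * eL n j i = eL n (j+1) (i, s)
      unfold eL
      rw [← Complex.exp_add]
      congr 1
      show _ = Real.pi * Complex.I * ((Wt j i + Wt0 s : ℤ) : ℂ) / n
      push_cast
      ring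

lemma repX (hX : (X : Matrix (Fin 2) (Fin 2) ℂ) = !![0, -1; 1, 0])
    (XG : G) (hXG : (XG : GL (Fin 2) ℂ) = X) (j : ℕ) (i : Idx j) :
    TPowRep G j XG (IB j i) = sgn j i • IB j (cmpl j i) := by
  induction j with
  | zero =>
      erw [IB_zero, show IB 0 (cmpl 0 i) = Pi.single (swap2 i) 1 from IB_zero _]
      exact stdRep_X X G hX XG hXG i
  | succ j ih =>
      obtain ⟨i, s⟩ := i
      rw [IB_succ]
      show ((TPowRep G j).tprod (stdRep G)) XG (IB j i ⊗ₜ[ℂ] Pi.single s 1) = _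
      rw [Representation.tprod_apply, TensorProduct.map_tmul, ih,
        stdRep_X X G hX XG hXG s, TensorProduct.tmul_smul, ← TensorProduct.smul_tmul',
        smul_smul, show cmpl (j+1) (i,s) = (cmpl j i, swap2 s) from rfl, IB_succ]
      rw [mul_comm]
      rfl

end Rep

-- commuting with generators suffices
lemma mem_equivEnd_iff_gens {Γ W : Type*} [Group Γ] [AddCommGroup W] [Module ℂ W]
    (S : Set Γ) (ρ : Representation ℂ (Subgroup.closure S) W) (f : W →ₗ[ℂ] W) :
    f ∈ equivEnd ρ ↔ ∀ (u : Γ) (hu : u ∈ S),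
      f ∘ₗ ρ ⟨u, Subgroup.subset_closure hu⟩ = ρ ⟨u, Subgroup.subset_closure hu⟩ ∘ₗ f := by
  constructor
  · intro hf u hu
    exact hf _
  · intro hgen g
    obtain ⟨u, hu⟩ := g
    induction hu using Subgroup.closure_induction with
    | mem x hx => exact hgen x hx
    | one => simp only [show ((⟨1, one_mem _⟩ : Subgroup.closure S)) = 1 from rfl, _root_.map_one,
        Module.End.one_eq_id, LinearMap.comp_id, LinearMap.id_comp]
    | mul x y hx hy ihx ihy =>
        have : ((⟨x * y, mul_mem hx hy⟩ : Subgroup.closure S))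
            = ⟨x, hx⟩ * ⟨y, hy⟩ := rfl
        rw [this, _root_.map_mul, Module.End.mul_eq_comp, ← LinearMap.comp_assoc, ihx,
          LinearMap.comp_assoc, ihy, LinearMap.comp_assoc]
    | inv x hx ihx =>
        have h1 : ((⟨x⁻¹, inv_mem hx⟩ : Subgroup.closure S)) = (⟨x, hx⟩ : Subgroup.closure S)⁻¹ := rfl
        rw [h1]
        set a := ρ ⟨x, hx⟩ with ha
        set b := ρ (⟨x, hx⟩ : Subgroup.closure S)⁻¹ with hb
        have hba : b ∘ₗ a = LinearMap.id := by
          rw [ha, hb, ← Module.End.mul_eq_comp, ← _root_.map_mul, inv_mul_cancel, _root_.map_one]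
          rfl
        have hab : a ∘ₗ b = LinearMap.id := by
          rw [ha, hb, ← Module.End.mul_eq_comp, ← _root_.map_mul, mul_inv_cancel, _root_.map_one]
          rfl
        calc f ∘ₗ b = (b ∘ₗ a) ∘ₗ f ∘ₗ b := by rw [hba, LinearMap.id_comp]
          _ = b ∘ₗ (a ∘ₗ f) ∘ₗ b := by rw [LinearMap.comp_assoc]; rfl
          _ = b ∘ₗ (f ∘ₗ a) ∘ₗ b := by rw [← ihx]
          _ = b ∘ₗ f ∘ₗ (a ∘ₗ b) := by simp only [LinearMap.comp_assoc]
          _ = b ∘ₗ f := by rw [hab, LinearMap.comp_id]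

section MatrixLayer

variable (n j : ℕ)

/-- divisibility condition cutting out equal eigenvalues -/
def dvdCond (p q : Idx j) : Prop := ((2*n : ℕ) : ℤ) ∣ (Wt j p - Wt j q)

instance (p q : Idx j) : Decidable (dvdCond n j p q) := by unfold dvdCond; infer_instance

lemma dvdCond_cmpl {p q : Idx j} (h : dvdCond n j p q) :
    dvdCond n j (cmpl j p) (cmpl j q) := by
  unfold dvdCond at h ⊢
  rw [Wt_cmpl, Wt_cmpl, show -Wt j p - -Wt j q = -(Wt j p - Wt j q) by ring]
  exact dvd_neg.mpr h

lemma lst_cmpl_zero {p : Idx j} (h : ¬ lst j p = 0) : lst j (cmpl j p) = 0 := by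
  rw [lst_cmpl]
  simp [swap2, h]

/-- index set for the basis of the commutant -/
abbrev Rset : Type := {r : Idx j × Idx j // dvdCond n j r.1 r.2 ∧ lst j r.1 = 0}

def PhiFun (c : Rset n j → ℂ) : Matrix (Idx j) (Idx j) ℂ := fun p q =>
  if h : dvdCond n j p q then
    (if h0 : lst j p = 0 then c ⟨(p, q), h, h0⟩
     else sgn j p * sgn j q * c ⟨(cmpl j p, cmpl j q), dvdCond_cmpl n j h, lst_cmpl_zero j h0⟩)
  else 0

def Phi : (Rset n j → ℂ) →ₗ[ℂ] Matrix (Idx j) (Idx j) ℂ where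
  toFun := PhiFun n j
  map_add' c d := by
    funext p q
    show PhiFun n j (c + d) p q = PhiFun n j c p q + PhiFun n j d p q
    unfold PhiFun
    split_ifs <;> simp <;> ring
  map_smul' a c := by
    funext p q
    show PhiFun n j (a • c) p q = a * PhiFun n j c p q
    unfold PhiFun
    split_ifs <;> simp <;> ring

lemma Phi_injective : Function.Injective (Phi n j) := by
  intro c d h
  funext r
  obtain ⟨⟨p, q⟩, hd, h0⟩ := r
  have := congrFun (congrFun (congrArg (fun M => (M : Matrix (Idx j) (Idx j) ℂ)) h) p) q
  change PhiFun n j c p q = PhiFun n j d p q at this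
  simpa [Phi, PhiFun, dif_pos hd, dif_pos h0] using this

/-- diagonal matrix of the A-action -/
def MAmat : Matrix (Idx j) (Idx j) ℂ := Matrix.diagonal (eL n j)

/-- signed permutation matrix of the X-action -/
def MXmat : Matrix (Idx j) (Idx j) ℂ := fun p q => if p = cmpl j q then sgn j q else 0

lemma mul_MXmat_apply (m : Matrix (Idx j) (Idx j) ℂ) (p q : Idx j) :
    (m * MXmat j) p q = m p (cmpl j q) * sgn j q := by
  rw [Matrix.mul_apply]
  rw [Finset.sum_eq_single (cmpl j q)]
  · rw [MXmat, if_pos rfl]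
  · intro t _ ht
    rw [MXmat, if_neg ht, mul_zero]
  · intro h
    exact absurd (Finset.mem_univ _) h

lemma MXmat_mul_apply (m : Matrix (Idx j) (Idx j) ℂ) (p q : Idx j) :
    (MXmat j * m) p q = sgn j (cmpl j p) * m (cmpl j p) q := by
  rw [Matrix.mul_apply]
  rw [Finset.sum_eq_single (cmpl j p)]
  · rw [MXmat, if_pos (cmpl_cmpl j p).symm]
  · intro t _ ht
    rw [MXmat, if_neg, zero_mul]
    intro hp
    exact ht (by rw [hp, cmpl_cmpl])
  · intro h
    exact absurd (Finset.mem_univ _) h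

lemma sgn_cmpl_eq (i : Idx j) : sgn j (cmpl j i) = (-1)^(j+1) * sgn j i := by
  calc sgn j (cmpl j i) = (sgn j i * sgn j i) * sgn j (cmpl j i) := by
        rw [sgn_mul_self, one_mul]
    _ = sgn j i * (sgn j i * sgn j (cmpl j i)) := by ring
    _ = sgn j i * (-1)^(j+1) := by rw [sgn_mul_cmpl]
    _ = (-1)^(j+1) * sgn j i := by ring

lemma sgn_cmpl_mul_sgn_cmpl (p q : Idx j) :
    sgn j (cmpl j p) * sgn j (cmpl j q) = sgn j p * sgn j q := by
  rw [sgn_cmpl_eq, sgn_cmpl_eq]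
  have : ((-1 : ℂ))^(j+1) * (-1)^(j+1) = 1 := by
    rw [← pow_add, show (j+1)+(j+1) = 2*(j+1) by ring, pow_mul]
    norm_num
  calc (-1 : ℂ)^(j+1) * sgn j p * ((-1)^(j+1) * sgn j q)
      = ((-1 : ℂ)^(j+1) * (-1)^(j+1)) * (sgn j p * sgn j q) := by ring
    _ = sgn j p * sgn j q := by rw [this, one_mul]

variable {n} in
lemma eL_eq_iff (hn : 0 < n) (p q : Idx j) :
    eL n j p = eL n j q ↔ dvdCond n j p q := by
  have hπ : (Real.pi : ℂ) ≠ 0 := by exact_mod_cast Real.pi_ne_zero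
  have hI : Complex.I ≠ 0 := Complex.I_ne_zero
  have hn' : (n : ℂ) ≠ 0 := by exact_mod_cast hn.ne'
  rw [eL, eL, Complex.exp_eq_exp_iff_exists_int]
  constructor
  · rintro ⟨m, hm⟩
    refine ⟨m, ?_⟩
    field_simp at hm
    have h2 : (Real.pi : ℂ) * Complex.I * ((Wt j p - Wt j q : ℤ) : ℂ)
        = (Real.pi : ℂ) * Complex.I * ((2 * n * m : ℤ) : ℂ) := by
      push_cast
      linear_combination ((Real.pi : ℂ) * Complex.I) * hm
    have h3 := mul_left_cancel₀ (mul_ne_zero hπ hI) h2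
    exact_mod_cast h3
  · rintro ⟨m, hm⟩
    refine ⟨m, ?_⟩
    have hc : ((Wt j p : ℤ) : ℂ) = ((Wt j q : ℤ) : ℂ) + 2 * n * m := by
      have h4 : Wt j p = Wt j q + 2 * n * m := by push_cast at hm; linarith
      rw [h4]
      push_cast
      ring
    field_simp
    linear_combination hc

variable {n j} in
lemma matrix_entry_zero_of_not_dvd (hn : 0 < n) {m : Matrix (Idx j) (Idx j) ℂ}
    (hm : m * MAmat n j = MAmat n j * m) {p q : Idx j} (h : ¬ dvdCond n j p q) :
    m p q = 0 := by
  have h1 : (m * MAmat n j) p q = (MAmat n j * m) p q := by rw [hm]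
  rw [MAmat, Matrix.mul_diagonal, Matrix.diagonal_mul] at h1
  have hne : eL n j p ≠ eL n j q := fun he => h ((eL_eq_iff j hn p q).mp he)
  have : (eL n j q - eL n j p) * m p q = 0 := by linear_combination h1
  rcases mul_eq_zero.mp this with h' | h'
  · exact absurd (by linear_combination h') hne.symm
  · exact h'

variable {n j} in
/-- the entrywise consequence of commuting with `MXmat` -/
lemma matrix_entry_cmpl {m : Matrix (Idx j) (Idx j) ℂ}
    (hm : m * MXmat j = MXmat j * m) (p q : Idx j) :
    m p q = sgn j p * sgn j q * m (cmpl j p) (cmpl j q) := by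
  have h1 : (m * MXmat j) p (cmpl j q) = (MXmat j * m) p (cmpl j q) := by rw [hm]
  rw [mul_MXmat_apply, MXmat_mul_apply, cmpl_cmpl] at h1
  -- h1 : m p q * sgn j (cmpl j q) = sgn j (cmpl j p) * m (cmpl j p) (cmpl j q)
  have h2 := congrArg (fun z => sgn j (cmpl j q) * z) h1
  -- multiply and use sgn squares
  calc m p q = (sgn j (cmpl j q) * sgn j (cmpl j q)) * m p q := by
        rw [sgn_mul_self, one_mul]
    _ = sgn j (cmpl j q) * (m p q * sgn j (cmpl j q)) := by ring
    _ = sgn j (cmpl j q) * (sgn j (cmpl j p) * m (cmpl j p) (cmpl j q)) := by rw [h1]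
    _ = (sgn j (cmpl j p) * sgn j (cmpl j q)) * m (cmpl j p) (cmpl j q) := by ring
    _ = sgn j p * sgn j q * m (cmpl j p) (cmpl j q) := by rw [sgn_cmpl_mul_sgn_cmpl]

variable {n j} in
lemma Phi_comm_MA (hn : 0 < n) (c : Rset n j → ℂ) :
    PhiFun n j c * MAmat n j = MAmat n j * PhiFun n j c := by
  rw [← Matrix.ext_iff]
  intro p q
  rw [MAmat, Matrix.mul_diagonal, Matrix.diagonal_mul]
  by_cases h : dvdCond n j p q
  · rw [(eL_eq_iff j hn p q).mpr h, mul_comm]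
  · rw [show PhiFun n j c p q = 0 from dif_neg h, zero_mul, mul_zero]

variable {n j} in
lemma PhiFun_pos0 (c : Rset n j → ℂ) {p q : Idx j} (h : dvdCond n j p q) (h0 : lst j p = 0) :
    PhiFun n j c p q = c ⟨(p, q), h, h0⟩ := by
  unfold PhiFun
  rw [dif_pos h, dif_pos h0]

variable {n j} in
lemma PhiFun_pos1 (c : Rset n j → ℂ) {p q : Idx j} (h : dvdCond n j p q) (h0 : ¬ lst j p = 0) :
    PhiFun n j c p q
      = sgn j p * sgn j q * c ⟨(cmpl j p, cmpl j q), dvdCond_cmpl n j h, lst_cmpl_zero j h0⟩ := by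
  unfold PhiFun
  rw [dif_pos h, dif_neg h0]

variable {n j} in
lemma PhiFun_neg (c : Rset n j → ℂ) {p q : Idx j} (h : ¬ dvdCond n j p q) :
    PhiFun n j c p q = 0 := dif_neg h

variable {n j} in
lemma Phi_comm_MX (c : Rset n j → ℂ) :
    PhiFun n j c * MXmat j = MXmat j * PhiFun n j c := by
  rw [← Matrix.ext_iff]
  intro p q
  rw [mul_MXmat_apply, MXmat_mul_apply]
  by_cases h : dvdCond n j p (cmpl j q)
  · have h' : dvdCond n j (cmpl j p) q := by
      have := dvdCond_cmpl n j h
      rwa [cmpl_cmpl] at this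
    by_cases h0 : lst j p = 0
    · have h0' : ¬ lst j (cmpl j p) = 0 := by
        rw [lst_cmpl, h0]
        simp [swap2]
      rw [PhiFun_pos0 c h h0, PhiFun_pos1 c h' h0']
      have harg : (⟨(cmpl j (cmpl j p), cmpl j q), dvdCond_cmpl n j h', lst_cmpl_zero j h0'⟩ : Rset n j)
          = ⟨(p, cmpl j q), h, h0⟩ := Subtype.ext (by
            show (cmpl j (cmpl j p), cmpl j q) = (p, cmpl j q)
            rw [cmpl_cmpl])
      rw [harg]
      set v := c ⟨(p, cmpl j q), h, h0⟩ with hv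
      linear_combination (-(sgn j q * v)) * sgn_mul_self j (cmpl j p)
    · have h0'' : lst j (cmpl j p) = 0 := lst_cmpl_zero j h0
      rw [PhiFun_pos1 c h h0, PhiFun_pos0 c h' h0'']
      have harg : (⟨(cmpl j p, cmpl j (cmpl j q)), dvdCond_cmpl n j h, lst_cmpl_zero j h0⟩ : Rset n j)
          = ⟨(cmpl j p, q), h', h0''⟩ := Subtype.ext (by
            show (cmpl j p, cmpl j (cmpl j q)) = (cmpl j p, q)
            rw [cmpl_cmpl])
      rw [harg]
      set v := c ⟨(cmpl j p, q), h', h0''⟩ with hv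
      rw [sgn_cmpl_eq j q, sgn_cmpl_eq j p]
      linear_combination (sgn j p * (-1 : ℂ)^(j+1) * v) * sgn_mul_self j q
  · have h'' : ¬ dvdCond n j (cmpl j p) q := fun hc => h (by
      have := dvdCond_cmpl n j hc
      rwa [cmpl_cmpl] at this)
    rw [PhiFun_neg c h, PhiFun_neg c h'', zero_mul, mul_zero]

end MatrixLayer

section RangeLayer
variable {n j : ℕ}

lemma Phi_apply (c : Rset n j → ℂ) : Phi n j c = PhiFun n j c := rfl

lemma PhiFun_eq_of_comm (hn : 0 < n) {m : Matrix (Idx j) (Idx j) ℂ}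
    (hA : m * MAmat n j = MAmat n j * m) (hX : m * MXmat j = MXmat j * m) :
    PhiFun n j (fun r => m r.1.1 r.1.2) = m := by
  funext p q
  by_cases h : dvdCond n j p q
  · by_cases h0 : lst j p = 0
    · rw [PhiFun_pos0 _ h h0]
    · rw [PhiFun_pos1 _ h h0]
      exact (matrix_entry_cmpl hX p q).symm
  · rw [PhiFun_neg _ h]
    exact (matrix_entry_zero_of_not_dvd hn hA h).symm

lemma comm_iff_toMatrix {W : Type*} [AddCommGroup W] [Module ℂ W] {ι : Type*}
    [Fintype ι] [DecidableEq ι] (B : Module.Basis ι ℂ W) (f g : W →ₗ[ℂ] W) :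
    f ∘ₗ g = g ∘ₗ f ↔
      LinearMap.toMatrix B B f * LinearMap.toMatrix B B g
        = LinearMap.toMatrix B B g * LinearMap.toMatrix B B f := by
  rw [← LinearMap.toMatrix_comp B B B, ← LinearMap.toMatrix_comp B B B]
  exact ⟨fun h => by rw [h], fun h => (LinearMap.toMatrix B B).injective h⟩

end RangeLayer

section TM
variable (n : ℕ) (X A : GL (Fin 2) ℂ) (G : Subgroup (GL (Fin 2) ℂ))

lemma tmA (hA : (A : Matrix (Fin 2) (Fin 2) ℂ) =
      !![Complex.exp (Real.pi * Complex.I / n), 0;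
         0, Complex.exp (-(Real.pi * Complex.I / n))])
    (AG : G) (hAG : (AG : GL (Fin 2) ℂ) = A) (j : ℕ) :
    LinearMap.toMatrix (IB j) (IB j) ((TPowRep G j) AG) = MAmat n j := by
  rw [← Matrix.ext_iff]
  intro p q
  rw [LinearMap.toMatrix_apply, repA n A G hA AG hAG j q, _root_.map_smul, Module.Basis.repr_self]
  by_cases hpq : p = q
  · subst hpq
    simp [MAmat, Matrix.diagonal_apply]
  · simp [MAmat, Matrix.diagonal_apply, hpq, Finsupp.single_apply, Ne.symm hpq]

lemma tmX (hX : (X : Matrix (Fin 2) (Fin 2) ℂ) = !![0, -1; 1, 0])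
    (XG : G) (hXG : (XG : GL (Fin 2) ℂ) = X) (j : ℕ) :
    LinearMap.toMatrix (IB j) (IB j) ((TPowRep G j) XG) = MXmat j := by
  rw [← Matrix.ext_iff]
  intro p q
  rw [LinearMap.toMatrix_apply, repX X G hX XG hXG j q, _root_.map_smul, Module.Basis.repr_self]
  by_cases hpq : p = cmpl j q
  · subst hpq
    simp [MXmat, Finsupp.single_apply]
  · rw [Finsupp.smul_apply, Finsupp.single_apply,
      if_neg (show ¬ cmpl j q = p from fun h => hpq h.symm), smul_zero, MXmat, if_neg hpq]

end TM

theorem finrank_equivEnd_eq (n : ℕ) (hn : 0 < n) (X A : GL (Fin 2) ℂ)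
    (hX : (X : Matrix (Fin 2) (Fin 2) ℂ) = !![0, -1; 1, 0])
    (hA : (A : Matrix (Fin 2) (Fin 2) ℂ) =
      !![Complex.exp (Real.pi * Complex.I / n), 0;
         0, Complex.exp (-(Real.pi * Complex.I / n))])
    (j : ℕ) :
    Module.finrank ℂ (equivEnd (TPowRep (Subgroup.closure {X, A}) j))
      = Fintype.card (Rset n j) := by
  have hXmem : X ∈ Subgroup.closure {X, A} := Subgroup.subset_closure (Set.mem_insert _ _)
  have hAmem : A ∈ Subgroup.closure {X, A} :=
    Subgroup.subset_closure (Set.mem_insert_of_mem _ rfl)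
  let XG : Subgroup.closure {X, A} := ⟨X, hXmem⟩
  let AG : Subgroup.closure {X, A} := ⟨A, hAmem⟩
  have tmX' := tmX X (Subgroup.closure {X, A}) hX XG rfl j
  have tmA' := tmA n A (Subgroup.closure {X, A}) hA AG rfl j
  let Θ : (Rset n j → ℂ) →ₗ[ℂ] ((TPow j : Type) →ₗ[ℂ] TPow j) :=
    (Matrix.toLin (IB j) (IB j)).toLinearMap ∘ₗ Phi n j
  have hrange : LinearMap.range Θ = equivEnd (TPowRep (Subgroup.closure {X, A}) j) := by
    apply le_antisymm
    · rintro f ⟨c, rfl⟩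
      rw [mem_equivEnd_iff_gens {X, A} (TPowRep (Subgroup.closure {X, A}) j)]
      intro u hu
      have hΘ : Θ c = Matrix.toLin (IB j) (IB j) (PhiFun n j c) := rfl
      have hcomX : Θ c ∘ₗ (TPowRep (Subgroup.closure {X, A}) j) XG
          = (TPowRep (Subgroup.closure {X, A}) j) XG ∘ₗ Θ c := by
        rw [hΘ, comm_iff_toMatrix (IB j), LinearMap.toMatrix_toLin, tmX']
        exact Phi_comm_MX c
      have hcomA : Θ c ∘ₗ (TPowRep (Subgroup.closure {X, A}) j) AG
          = (TPowRep (Subgroup.closure {X, A}) j) AG ∘ₗ Θ c := by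
        rw [hΘ, comm_iff_toMatrix (IB j), LinearMap.toMatrix_toLin, tmA']
        exact Phi_comm_MA hn c
      rcases hu with huX | huA
      · subst huX
        exact hcomX
      · have huA' : u = A := huA
        subst huA'
        exact hcomA
    · intro f hf
      have hcX := hf XG
      have hcA := hf AG
      rw [comm_iff_toMatrix (IB j), tmX'] at hcX
      rw [comm_iff_toMatrix (IB j), tmA'] at hcA
      refine ⟨fun r => (LinearMap.toMatrix (IB j) (IB j) f) r.1.1 r.1.2, ?_⟩
      show Matrix.toLin (IB j) (IB j)
        (PhiFun n j (fun r => (LinearMap.toMatrix (IB j) (IB j) f) r.1.1 r.1.2)) = f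
      rw [PhiFun_eq_of_comm hn hcA hcX]
      exact Matrix.toLin_toMatrix _ _ f
  have hinj : Function.Injective Θ := fun a b h =>
    Phi_injective n j ((Matrix.toLin (IB j) (IB j)).injective h)
  rw [← hrange, LinearMap.finrank_range_of_inj hinj,
    Module.finrank_fintype_fun_eq_card]

section Counting
open Finset

lemma two_mul_card_Rset (n j : ℕ) :
    2 * Fintype.card (Rset n j)
      = (univ.filter fun r : Idx j × Idx j => dvdCond n j r.1 r.2).card := by
  rw [Fintype.card_subtype]
  set FD := univ.filter fun r : Idx j × Idx j => dvdCond n j r.1 r.2 with hFD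
  have hsplit := Finset.card_filter_add_card_filter_not
    (s := FD) (p := fun r : Idx j × Idx j => lst j r.1 = 0)
  have h0 : univ.filter (fun r : Idx j × Idx j => dvdCond n j r.1 r.2 ∧ lst j r.1 = 0)
      = FD.filter (fun r : Idx j × Idx j => lst j r.1 = 0) := by
    rw [hFD, Finset.filter_filter]
  have hbij : (FD.filter (fun r : Idx j × Idx j => lst j r.1 = 0)).card
      = (FD.filter (fun r : Idx j × Idx j => ¬ lst j r.1 = 0)).card := by
    apply Finset.card_bij' (fun r _ => (cmpl j r.1, cmpl j r.2))
      (fun r _ => (cmpl j r.1, cmpl j r.2))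
    · intro r hr
      simp only [hFD, Finset.mem_filter, Finset.mem_univ, true_and] at hr ⊢
      refine ⟨dvdCond_cmpl n j hr.1, ?_⟩
      rw [lst_cmpl, hr.2]
      simp [swap2]
    · intro r hr
      simp only [hFD, Finset.mem_filter, Finset.mem_univ, true_and] at hr ⊢
      exact ⟨dvdCond_cmpl n j hr.1, lst_cmpl_zero j hr.2⟩
    · intro r _
      simp [cmpl_cmpl]
    · intro r _
      simp [cmpl_cmpl]
  rw [h0]
  omega

variable {n : ℕ}

lemma geom_ortho (hn : 0 < n) (d : ℤ) :
    ∑ m ∈ range (2*n), Complex.exp (Real.pi * Complex.I * d / n) ^ m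
      = if ((2*n : ℕ) : ℤ) ∣ d then ((2*n : ℕ) : ℂ) else 0 := by
  have hπ : (Real.pi : ℂ) ≠ 0 := by exact_mod_cast Real.pi_ne_zero
  have hn' : (n : ℂ) ≠ 0 := by exact_mod_cast hn.ne'
  set ζ := Complex.exp (Real.pi * Complex.I * d / n) with hζ
  have hpow : ζ ^ (2*n) = 1 := by
    rw [hζ, ← Complex.exp_nat_mul]
    have harg : ((2*n : ℕ) : ℂ) * (Real.pi * Complex.I * d / n)
        = (d : ℂ) * (2 * Real.pi * Complex.I) := by
      push_cast
      field_simp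
    rw [harg]
    exact Complex.exp_int_mul_two_pi_mul_I d
  by_cases hdvd : ((2*n : ℕ) : ℤ) ∣ d
  · obtain ⟨t, ht⟩ := hdvd
    have hζ1 : ζ = 1 := by
      rw [hζ, ht]
      have harg : Real.pi * Complex.I * ((((2*n : ℕ) : ℤ) * t : ℤ) : ℂ) / n
          = (t : ℂ) * (2 * Real.pi * Complex.I) := by
        push_cast
        field_simp
      rw [harg]
      exact Complex.exp_int_mul_two_pi_mul_I t
    rw [if_pos ⟨t, ht⟩]
    simp [hζ1]
  · have hζ1 : ζ ≠ 1 := by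
      intro h1
      apply hdvd
      rw [hζ, Complex.exp_eq_one_iff] at h1
      obtain ⟨m, hm⟩ := h1
      refine ⟨m, ?_⟩
      have h2 : (Real.pi : ℂ) * Complex.I * ((d : ℤ) : ℂ)
          = (Real.pi : ℂ) * Complex.I * ((((2*n : ℕ) : ℤ) * m : ℤ) : ℂ) := by
        field_simp at hm
        push_cast
        linear_combination ((Real.pi : ℂ) * Complex.I) * hm
      have h3 := mul_left_cancel₀ (mul_ne_zero hπ Complex.I_ne_zero) h2
      exact_mod_cast h3
    rw [if_neg hdvd, geom_sum_eq hζ1, hpow]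
    simp

lemma Fsum0 (z : ℂ) :
    ∑ s : Fin 2, Complex.exp (z * (Wt0 s : ℂ)) = Complex.exp z + Complex.exp (-z) := by
  rw [Fin.sum_univ_two]
  norm_num [Wt0]

lemma Fsum (j : ℕ) (z : ℂ) :
    ∑ p : Idx j, Complex.exp (z * ((Wt j p : ℤ) : ℂ))
      = (Complex.exp z + Complex.exp (-z))^(j+1) := by
  induction j with
  | zero =>
      rw [pow_one]
      exact Fsum0 z
  | succ j ih =>
      rw [show (∑ p : Idx (j+1), Complex.exp (z * ((Wt (j+1) p : ℤ) : ℂ)))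
          = ∑ p : Idx j × Fin 2, Complex.exp (z * ((Wt j p.1 + Wt0 p.2 : ℤ) : ℂ)) from rfl,
        Fintype.sum_prod_type]
      have hsummand : ∀ (p : Idx j) (s : Fin 2),
          Complex.exp (z * ((Wt j p + Wt0 s : ℤ) : ℂ))
            = Complex.exp (z * ((Wt j p : ℤ) : ℂ)) * Complex.exp (z * ((Wt0 s : ℤ) : ℂ)) := by
        intro p s
        rw [← Complex.exp_add]
        congr 1
        push_cast
        ring
      calc ∑ p : Idx j, ∑ s : Fin 2, Complex.exp (z * ((Wt j p + Wt0 s : ℤ) : ℂ))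
          = ∑ p : Idx j, ∑ s : Fin 2,
              Complex.exp (z * ((Wt j p : ℤ) : ℂ)) * Complex.exp (z * ((Wt0 s : ℤ) : ℂ)) := by
            exact Finset.sum_congr rfl fun p _ => Finset.sum_congr rfl fun s _ => hsummand p s
        _ = (∑ p : Idx j, Complex.exp (z * ((Wt j p : ℤ) : ℂ)))
              * (∑ s : Fin 2, Complex.exp (z * ((Wt0 s : ℤ) : ℂ))) := by
            rw [Finset.sum_mul_sum]
        _ = (Complex.exp z + Complex.exp (-z))^(j+1) * (Complex.exp z + Complex.exp (-z)) := by
            rw [ih, Fsum0]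
        _ = (Complex.exp z + Complex.exp (-z))^(j+1+1) := by ring

lemma innerSumIdx (hn : 0 < n) (j : ℕ) (m : ℕ) :
    ∑ r : Idx j × Idx j, Complex.exp (Real.pi * Complex.I * ((Wt j r.1 - Wt j r.2 : ℤ) : ℂ) / n) ^ m
      = (((2 * Real.cos (m * Real.pi / n) : ℝ) : ℂ))^(2*(j+1)) := by
  have hn' : (n : ℂ) ≠ 0 := by exact_mod_cast hn.ne'
  set z : ℂ := Real.pi * Complex.I * m / n with hz
  have h1 : ∀ r : Idx j × Idx j,
      Complex.exp (Real.pi * Complex.I * ((Wt j r.1 - Wt j r.2 : ℤ) : ℂ) / n) ^ m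
        = Complex.exp (z * ((Wt j r.1 : ℤ) : ℂ)) * Complex.exp ((-z) * ((Wt j r.2 : ℤ) : ℂ)) := by
    intro r
    rw [← Complex.exp_nat_mul, ← Complex.exp_add]
    congr 1
    rw [hz]
    push_cast
    field_simp
    ring
  rw [Finset.sum_congr rfl fun r _ => h1 r]
  rw [show (∑ r : Idx j × Idx j,
        Complex.exp (z * ((Wt j r.1 : ℤ) : ℂ)) * Complex.exp ((-z) * ((Wt j r.2 : ℤ) : ℂ)))
      = ∑ p : Idx j, ∑ q : Idx j,
        Complex.exp (z * ((Wt j p : ℤ) : ℂ)) * Complex.exp ((-z) * ((Wt j q : ℤ) : ℂ))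
      from Fintype.sum_prod_type _]
  rw [← Finset.sum_mul_sum, Fsum j z, Fsum j (-z), neg_neg]
  have hcos : Complex.exp z + Complex.exp (-z) = ((2 * Real.cos (m * Real.pi / n) : ℝ) : ℂ) := by
    have hz2 : z = ((m * Real.pi / n : ℝ) : ℂ) * Complex.I := by
      rw [hz]
      push_cast
      ring
    rw [hz2, show -(((m * Real.pi / n : ℝ) : ℂ) * Complex.I)
        = ((-(m * Real.pi / n) : ℝ) : ℂ) * Complex.I by push_cast; ring,
      Complex.exp_mul_I, Complex.exp_mul_I,
      ← Complex.ofReal_cos, ← Complex.ofReal_cos, ← Complex.ofReal_sin, ← Complex.ofReal_sin,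
      Real.cos_neg, Real.sin_neg]
    push_cast
    ring
  rw [hcos, show Complex.exp (-z) + Complex.exp z
      = Complex.exp z + Complex.exp (-z) from add_comm _ _, hcos]
  rw [← pow_add]
  congr 1
  ring

lemma card_mul_eq_sum (hn : 0 < n) (j : ℕ) :
    (((univ.filter fun r : Idx j × Idx j => dvdCond n j r.1 r.2).card : ℕ) : ℝ) * (2*n)
      = ∑ m ∈ range (2*n), (2 * Real.cos (m * Real.pi / n))^(2*(j+1)) := by
  have key : (((univ.filter fun r : Idx j × Idx j => dvdCond n j r.1 r.2).card : ℕ) : ℂ) * ((2*n : ℕ) : ℂ)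
      = ((∑ m ∈ range (2*n), (2 * Real.cos (m * Real.pi / n))^(2*(j+1)) : ℝ) : ℂ) := by
    calc (((univ.filter fun r : Idx j × Idx j => dvdCond n j r.1 r.2).card : ℕ) : ℂ) * ((2*n : ℕ) : ℂ)
        = ∑ r : Idx j × Idx j,
            (if dvdCond n j r.1 r.2 then ((2*n : ℕ) : ℂ) else 0) := by
          rw [← Finset.sum_filter, Finset.sum_const, nsmul_eq_mul]
      _ = ∑ r : Idx j × Idx j, ∑ m ∈ range (2*n),
            Complex.exp (Real.pi * Complex.I * ((Wt j r.1 - Wt j r.2 : ℤ) : ℂ) / n) ^ m := by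
          exact Finset.sum_congr rfl fun r _ => (geom_ortho hn _).symm
      _ = ∑ m ∈ range (2*n), ∑ r : Idx j × Idx j,
            Complex.exp (Real.pi * Complex.I * ((Wt j r.1 - Wt j r.2 : ℤ) : ℂ) / n) ^ m := by
          exact Finset.sum_comm
      _ = ∑ m ∈ range (2*n), (((2 * Real.cos (m * Real.pi / n) : ℝ) : ℂ))^(2*(j+1)) := by
          exact Finset.sum_congr rfl fun m _ => innerSumIdx hn j m
      _ = ((∑ m ∈ range (2*n), (2 * Real.cos (m * Real.pi / n))^(2*(j+1)) : ℝ) : ℂ) := by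
          push_cast
          rfl
  exact_mod_cast key

lemma cos_sum_split (hn : 0 < n) (k : ℕ) :
    ∑ m ∈ range (2*n), (2 * Real.cos (m * Real.pi / n))^(2*k)
      = 2^(2*k) * (2 * (1 + ∑ m ∈ Finset.Icc 1 (n-1), Real.cos (m * Real.pi / n)^(2*k))) := by
  have hn' : (n : ℝ) ≠ 0 := Nat.cast_ne_zero.mpr hn.ne'
  have hhalf : ∑ m ∈ range (2*n), Real.cos (m * Real.pi / n)^(2*k)
      = 2 * (1 + ∑ m ∈ Finset.Icc 1 (n-1), Real.cos (m * Real.pi / n)^(2*k)) := by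
    have h2n : 2*n = n + n := by ring
    rw [h2n, Finset.sum_range_add]
    have hshift : ∀ i : ℕ, Real.cos (((n + i : ℕ) : ℝ) * Real.pi / n)^(2*k)
        = Real.cos ((i : ℝ) * Real.pi / n)^(2*k) := by
      intro i
      have harg : ((n + i : ℕ) : ℝ) * Real.pi / n = (i : ℝ) * Real.pi / n + Real.pi := by
        push_cast
        field_simp
        ring
      rw [harg, Real.cos_add_pi]
      exact Even.neg_pow (even_two_mul k) _
    rw [Finset.sum_congr rfl fun i _ => hshift i]
    have hfirst : ∑ m ∈ range n, Real.cos ((m : ℝ) * Real.pi / n)^(2*k)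
        = 1 + ∑ m ∈ Finset.Icc 1 (n-1), Real.cos ((m : ℝ) * Real.pi / n)^(2*k) := by
      obtain ⟨n', rfl⟩ : ∃ n', n = n' + 1 := ⟨n-1, (Nat.succ_pred_eq_of_pos hn).symm⟩
      rw [Finset.sum_range_succ']
      have hf0 : Real.cos (((0:ℕ) : ℝ) * Real.pi / ((n'+1 : ℕ) : ℝ))^(2*k) = 1 := by
        norm_num
      rw [hf0]
      rw [show Finset.Icc 1 ((n'+1)-1) = Finset.Ico 1 (n'+1) from by
        rw [Finset.Ico_add_one_right_eq_Icc]; norm_num]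
      rw [Finset.sum_Ico_eq_sum_range]
      norm_num [add_comm]
    rw [hfirst]
    ring
  calc ∑ m ∈ range (2*n), (2 * Real.cos (m * Real.pi / n))^(2*k)
      = ∑ m ∈ range (2*n), 2^(2*k) * Real.cos (m * Real.pi / n)^(2*k) := by
        exact Finset.sum_congr rfl fun m _ => mul_pow 2 _ (2*k)
    _ = 2^(2*k) * ∑ m ∈ range (2*n), Real.cos (m * Real.pi / n)^(2*k) := by
        rw [Finset.mul_sum]
    _ = _ := by rw [hhalf]

end Counting

/-- For all integers `n ≥ 1` and `k ≥ 1`, the dimension of the endomorphism algebra of the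
`k`-th tensor power of the standard representation of the dicyclic group of degree `n` is
given by `dim_ℂ End_{Dic_n}(V^{⊗k}) = (2^{2k+1}/(4n)) · (1 + Σ_{m=1}^{n-1} cos^{2k}(mπ/n))`. -/
theorem dim_equivEnd_tensorPower_dicyclic_closed_formula
    (n : ℕ) (hn : 1 ≤ n) (X A : GL (Fin 2) ℂ)
    (hX : (X : Matrix (Fin 2) (Fin 2) ℂ) = !![0, -1; 1, 0])
    (hA : (A : Matrix (Fin 2) (Fin 2) ℂ) =
      !![Complex.exp (Real.pi * Complex.I / n), 0;
         0, Complex.exp (-(Real.pi * Complex.I / n))])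
    (G : Subgroup (GL (Fin 2) ℂ)) (hG : G = Subgroup.closure {X, A})
    (k : ℕ) (hk : 1 ≤ k) :
    (Module.finrank ℂ (equivEnd (TPowRep G (k - 1))) : ℝ) =
      2 ^ (2 * k + 1) / (4 * n) *
        (1 + ∑ m ∈ Finset.Icc 1 (n - 1), Real.cos (m * Real.pi / n) ^ (2 * k)) := by
  subst hG
  have hn0 : 0 < n := hn
  obtain ⟨j, rfl⟩ : ∃ j, k = j + 1 := ⟨k-1, (Nat.succ_pred_eq_of_pos hk).symm⟩
  rw [show j + 1 - 1 = j from rfl]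
  rw [finrank_equivEnd_eq n hn0 X A hX hA j]
  have h2 := two_mul_card_Rset n j
  have h3 := card_mul_eq_sum (n := n) hn0 j
  have h4 := cos_sum_split (n := n) hn0 (j+1)
  set S := ∑ m ∈ Finset.Icc 1 (n-1), Real.cos (m * Real.pi / n)^(2*(j+1)) with hS
  have hA' : ((2 * Fintype.card (Rset n j) : ℕ) : ℝ) * (2*n)
      = 2^(2*(j+1)) * (2 * (1 + S)) := by
    rw [h2, h3, h4]
  push_cast at hA'
  have hcardR : ((Fintype.card (Rset n j) : ℝ)) * (4 * n) = 2 ^ (2*(j+1)+1) * (1 + S) := by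
    rw [pow_succ]
    linear_combination hA'
  have h4n : (4 * (n:ℝ)) ≠ 0 := by positivity
  rw [div_mul_eq_mul_div, eq_div_iff h4n]
  linear_combination hcardR
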